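/- arXiv:1605.00788 — 3 statements merged into one kernel-verified Lean document; each statement's English description precedes it below -/
import Mathlib

section
/- Let f : ℝⁿ → ℝ be α-exp-concave over a convex set B ⊂ ℝⁿ of diameter D, with ‖∇f(x)‖₂ ≤ G for all x ∈ B. Then for any 0 < η ≤ (1/2)·min{α, 1/(4GD)} and all x, y ∈ B, f(y) ≥ f(x) + ⟨∇f(x), y−x⟩ + (η/2)·(y−x)ᵀ(∇f(x)∇f(x)ᵀ)(y−x). -/
open Filter Set Topology

/-- First-order condition for concave functions. -/
lemma concave_tangent_ge {E : Type*} [NormedAddCommGroup E] [NormedSpace ℝ E]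
    {B : Set E} {g : E → ℝ} (hg : ConcaveOn ℝ B g) {x y : E} (hx : x ∈ B) (hy : y ∈ B)
    {L : E →L[ℝ] ℝ} (hL : HasFDerivAt g L x) : g y ≤ g x + L (y - x) := by
  set v := y - x with hv
  have h1 : HasDerivAt (fun t : ℝ => x + t • v) v 0 := by
    simpa using ((hasDerivAt_id (0:ℝ)).smul_const v).const_add x
  have hc : HasDerivAt (fun t : ℝ => g (x + t • v)) (L v) 0 := by
    have := hL.comp_hasDerivAt_of_eq (x := (0:ℝ)) h1 (by simp)
    exact this
  have hslope := hasDerivAt_iff_tendsto_slope.mp hc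
  have hsub : Tendsto (slope (fun t : ℝ => g (x + t • v)) 0) (𝓝[>] (0:ℝ)) (𝓝 (L v)) :=
    hslope.mono_left (nhdsWithin_mono _ (fun t ht => ne_of_gt ht))
  have hev : ∀ᶠ t in 𝓝[>] (0:ℝ), g y - g x ≤ slope (fun t : ℝ => g (x + t • v)) 0 t := by
    filter_upwards [Ioo_mem_nhdsGT_of_mem (by norm_num : (0:ℝ) ∈ Ico (0:ℝ) 1)] with t ht
    obtain ⟨ht0, ht1⟩ := ht
    have hcomb := hg.2 hx hy (by linarith : (0:ℝ) ≤ 1 - t) ht0.le (by ring)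
    have heq : (1 - t) • x + t • y = x + t • v := by
      rw [hv, smul_sub, sub_smul, one_smul]; abel
    rw [heq, smul_eq_mul, smul_eq_mul] at hcomb
    rw [slope_def_field]
    simp only [zero_smul, add_zero, sub_zero]
    rw [le_div_iff₀ ht0]
    nlinarith
  have := ge_of_tendsto hsub hev
  linarith

/-- Scaling exp-concavity down. -/
lemma expconcave_scale {E : Type*} [NormedAddCommGroup E] [NormedSpace ℝ E]
    {B : Set E} (hB : Convex ℝ B) {f : E → ℝ} {α β : ℝ} (hα : 0 < α) (hβ : 0 < β) (hβα : β ≤ α)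
    (hexp : ConcaveOn ℝ B (fun x => Real.exp (-α * f x))) :
    ConcaveOn ℝ B (fun x => Real.exp (-β * f x)) := by
  have hp0 : 0 ≤ β / α := by positivity
  have hp1 : β / α ≤ 1 := by rw [div_le_one hα]; exact hβα
  have key : ∀ z : E, Real.exp (-β * f z) = (Real.exp (-α * f z)) ^ (β / α) := by
    intro z
    rw [← Real.exp_mul]
    congr 1
    field_simp
  refine ⟨hB, fun p hp q hq a b ha hb hab => ?_⟩
  simp only [key, smul_eq_mul]
  have hA : (0:ℝ) ≤ Real.exp (-α * f p) := (Real.exp_pos _).le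
  have hBq : (0:ℝ) ≤ Real.exp (-α * f q) := (Real.exp_pos _).le
  have hcomb := hexp.2 hp hq ha hb hab
  simp only [smul_eq_mul] at hcomb
  calc a * Real.exp (-α * f p) ^ (β / α) + b * Real.exp (-α * f q) ^ (β / α)
      ≤ (a * Real.exp (-α * f p) + b * Real.exp (-α * f q)) ^ (β / α) := by
        have := (Real.concaveOn_rpow hp0 hp1).2 (mem_Ici.mpr hA) (mem_Ici.mpr hBq) ha hb hab
        simpa [smul_eq_mul] using this
    _ ≤ (Real.exp (-α * f (a • p + b • q))) ^ (β / α) :=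
        Real.rpow_le_rpow (by positivity) hcomb hp0

/-- Quadratic exponential bound. -/
lemma one_sub_le_exp_quad {z : ℝ} (hz : |z| ≤ 1/4) :
    1 - z ≤ Real.exp (-z - z^2/4) := by
  set u := -z - z^2/4 with hu
  have hz1 : -(1/4) ≤ z := neg_le_of_abs_le hz
  have hz2 : z ≤ 1/4 := le_of_abs_le hz
  have hub : |u| ≤ 1 := by rw [abs_le, hu]; constructor <;> nlinarith
  have hb := Real.exp_bound hub (n := 3) (by norm_num)
  have hsum : ∑ m ∈ Finset.range 3, u ^ m / m.factorial = 1 + u + u^2/2 := by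
    norm_num [Finset.sum_range_succ, Nat.factorial]
  rw [hsum] at hb
  norm_num [Nat.factorial] at hb
  have hlow : 1 + u + u^2/2 - |u|^3 * (2/9) ≤ Real.exp u := by
    have := abs_le.mp hb
    linarith [this.1]
  refine le_trans ?_ hlow
  have habs : |u| ≤ 17/64 := by rw [abs_le, hu]; constructor <;> nlinarith
  have h3 : |u|^3 ≤ (17/64) * u^2 := by
    have : |u|^3 = |u| * |u|^2 := by ring
    rw [this, sq_abs]
    nlinarith [sq_nonneg u]
  have : |u|^3 * (2/9) ≤ (17/288) * u^2 := by nlinarith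
  have hgoal : 1 - z ≤ 1 + u + u^2/2 - (17/288) * u^2 := by
    rw [hu]
    nlinarith [sq_nonneg z, sq_nonneg (z*z)]
  linarith

open Matrix

set_option maxHeartbeats 1000000 in
theorem stmt0 {n : ℕ} (B : Set (Fin n → ℝ)) (hB : Convex ℝ B)
    (f : (Fin n → ℝ) → ℝ) (gradf : (Fin n → ℝ) → (Fin n → ℝ))
    (α D G η : ℝ) (hα : 0 < α)
    (hexp : ConcaveOn ℝ B (fun x => Real.exp (-α * f x)))
    (hdiam : ∀ x ∈ B, ∀ y ∈ B, Real.sqrt ((x - y) ⬝ᵥ (x - y)) ≤ D)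
    (hgrad : ∀ x ∈ B, ∃ L : (Fin n → ℝ) →L[ℝ] ℝ, HasFDerivAt f L x ∧ ∀ y, L y = gradf x ⬝ᵥ y)
    (hG : ∀ x ∈ B, Real.sqrt (gradf x ⬝ᵥ gradf x) ≤ G)
    (hη : 0 < η) (hη2 : η ≤ (1/2) * min α (1/(4*G*D)))
    (x y : Fin n → ℝ) (hx : x ∈ B) (hy : y ∈ B) :
    f y ≥ f x + gradf x ⬝ᵥ (y - x) + η/2 * (gradf x ⬝ᵥ (y - x))^2 := by
  set s := gradf x ⬝ᵥ (y - x) with hs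
  -- positivity facts
  have hmin : 0 < min α (1/(4*G*D)) := by
    by_contra h
    push_neg at h
    nlinarith [min_le_left α (1/(4*G*D))]
  have hGD : 0 < 4*G*D := one_div_pos.mp (lt_of_lt_of_le hmin (min_le_right _ _))
  have hηα : 2*η ≤ α := by
    have := le_trans hη2 (by nlinarith [min_le_left α (1/(4*G*D))] : (1/2) * min α (1/(4*G*D)) ≤ α/2)
    linarith
  have hηGD : 2*η ≤ 1/(4*G*D) := by
    have := le_trans hη2 (by nlinarith [min_le_right α (1/(4*G*D))] : (1/2) * min α (1/(4*G*D)) ≤ (1/(4*G*D))/2)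
    nlinarith [hmin, min_le_right α (1/(4*G*D))]
  -- bounds on s
  have hGnn : 0 ≤ G := le_trans (Real.sqrt_nonneg _) (hG x hx)
  have hDnn : 0 ≤ D := le_trans (Real.sqrt_nonneg _) (hdiam x hx y hy)
  have hgg : gradf x ⬝ᵥ gradf x ≤ G^2 := by
    have h1 := hG x hx
    have h2 : 0 ≤ gradf x ⬝ᵥ gradf x := by
      apply Finset.sum_nonneg; intro i _; exact mul_self_nonneg _
    nlinarith [Real.sq_sqrt h2, Real.sqrt_nonneg (gradf x ⬝ᵥ gradf x)]
  have hvv : (y - x) ⬝ᵥ (y - x) ≤ D^2 := by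
    have h1 := hdiam x hx y hy
    have heq : (x - y) ⬝ᵥ (x - y) = (y - x) ⬝ᵥ (y - x) := by
      have : x - y = -(y - x) := by abel
      rw [this, neg_dotProduct, dotProduct_neg, neg_neg]
    rw [heq] at h1
    have h2 : 0 ≤ (y - x) ⬝ᵥ (y - x) := by
      apply Finset.sum_nonneg; intro i _; exact mul_self_nonneg _
    nlinarith [Real.sq_sqrt h2, Real.sqrt_nonneg ((y - x) ⬝ᵥ (y - x))]
  have hCS : s^2 ≤ G^2 * D^2 := by
    have h1 := Finset.sum_mul_sq_le_sq_mul_sq Finset.univ (gradf x) (y - x)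
    have h2 : 0 ≤ (y - x) ⬝ᵥ (y - x) := by
      apply Finset.sum_nonneg; intro i _; exact mul_self_nonneg _
    have h3 : 0 ≤ gradf x ⬝ᵥ gradf x := by
      apply Finset.sum_nonneg; intro i _; exact mul_self_nonneg _
    have e1 : gradf x ⬝ᵥ gradf x = ∑ i, gradf x i ^ 2 := by
      simp [dotProduct, sq]
    have e2 : (y - x) ⬝ᵥ (y - x) = ∑ i, (y - x) i ^ 2 := by
      simp [dotProduct, sq]
    have e3 : s = ∑ i, gradf x i * (y - x) i := rfl
    rw [e1] at hgg h3
    rw [e2] at hvv h2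
    rw [e3]
    exact le_trans h1 (mul_le_mul hgg hvv h2 (by positivity))
  -- |2ηs| ≤ 1/4
  have hz : |2*η*s| ≤ 1/4 := by
    have hz2 : (2*η*s)^2 ≤ 1/16 := by
      have h1 : (2*η)^2 * s^2 ≤ (2*η)^2 * (G^2*D^2) := by
        apply mul_le_mul_of_nonneg_left hCS (by positivity)
      have h2 : (2*η) * (G*D) ≤ 1/4 := by
        have := mul_le_mul_of_nonneg_right hηGD (show (0:ℝ) ≤ G*D by nlinarith)
        rw [div_mul_eq_mul_div, one_mul] at this
        calc (2*η) * (G*D) ≤ G*D/(4*G*D) := this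
          _ = 1/4 := by rw [div_eq_iff hGD.ne']; ring
      have h4 : ((2*η)*(G*D))^2 ≤ 1/16 := by
        nlinarith [mul_nonneg (mul_nonneg (by linarith : (0:ℝ) ≤ 2*η) hGnn) hDnn]
      nlinarith [h1, h4]
    rw [abs_le]
    constructor <;> nlinarith [hz2, sq_nonneg (2*η*s + 1/4), sq_nonneg (2*η*s - 1/4)]
  -- 2η-exp-concavity
  have hexp2 : ConcaveOn ℝ B (fun z => Real.exp (-(2*η) * f z)) :=
    expconcave_scale hB hα (by positivity) hηα hexp
  -- gradient inequality
  obtain ⟨L, hLd, hLeq⟩ := hgrad x hx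
  have hFd : HasFDerivAt (fun z => Real.exp (-(2*η) * f z))
      (Real.exp (-(2*η) * f x) • ((-(2*η)) • L)) x := (hLd.const_mul (-(2*η))).exp
  have htang := concave_tangent_ge hexp2 hx hy hFd
  have happ : (Real.exp (-(2*η) * f x) • ((-(2*η)) • L)) (y - x)
      = Real.exp (-(2*η) * f x) * (-(2*η) * s) := by
    simp [hLeq, hs]
  rw [happ] at htang
  -- combine with exp bound
  have hquad := one_sub_le_exp_quad hz
  have hEx : 0 < Real.exp (-(2*η) * f x) := Real.exp_pos _
  have hchain : Real.exp (-(2*η) * f y)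
      ≤ Real.exp (-(2*η) * f x) * Real.exp (-(2*η*s) - (2*η*s)^2/4) := by
    calc Real.exp (-(2*η) * f y)
        ≤ Real.exp (-(2*η) * f x) * (1 - 2*η*s) := by nlinarith [htang]
      _ ≤ Real.exp (-(2*η) * f x) * Real.exp (-(2*η*s) - (2*η*s)^2/4) :=
          mul_le_mul_of_nonneg_left hquad hEx.le
  rw [← Real.exp_add] at hchain
  have hle := Real.exp_le_exp.mp hchain
  have : -(2*η) * f x + (-(2*η*s) - (2*η*s)^2/4)
      = -(2*η) * (f x + s + η/2 * s^2) := by ring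
  rw [this] at hle
  have h' : 2*η*(f x + s + η/2 * s^2) ≤ 2*η*(f y) := by linarith
  exact le_of_mul_le_mul_left h' (by positivity)
end

section
/- Let g₁,…,g_T be vectors in ℝⁿ with ‖g_t‖₂ ≤ G. Define A₀ = ε·Iₙ with ε > 0 and A_t = A_{t−1} + g_t g_tᵀ. Then ∑_{t=1}^T g_tᵀ A_t^{−1} g_t ≤ n·log(1 + T·G²/(n·ε)). -/
open Matrix

lemma aux_trace_eq_sum_eig {m : Type*} [Fintype m] [DecidableEq m]
    {M : Matrix m m ℝ} (hM : M.IsHermitian) :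
    M.trace = ∑ i, hM.eigenvalues i := by
  nth_rewrite 1 [hM.spectral_theorem]
  rw [Unitary.conjStarAlgAut_apply]
  rw [Matrix.trace_mul_comm, ← Matrix.mul_assoc,
    (Matrix.mem_unitaryGroup_iff').mp (Matrix.IsHermitian.eigenvectorUnitary hM).2, one_mul]
  simp [Matrix.trace_diagonal]

lemma aux_log_det_le {m : Type*} [Fintype m] [DecidableEq m] [Nonempty m]
    {M : Matrix m m ℝ} (hM : M.PosDef) :
    Real.log M.det ≤ (Fintype.card m) * Real.log (M.trace / Fintype.card m) := by
  set k : ℝ := (Fintype.card m : ℝ) with hk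
  have hk0 : 0 < k := by
    have := Fintype.card_pos (α := m)
    positivity
  have hdet : M.det = ∏ i, hM.1.eigenvalues i := by
    simpa using hM.1.det_eq_prod_eigenvalues
  have hjensen := (strictConcaveOn_log_Ioi.concaveOn).le_map_sum
    (t := Finset.univ) (w := fun _ : m => k⁻¹) (p := fun i => hM.1.eigenvalues i)
    (fun i _ => by positivity)
    (by simp [Finset.card_univ]; rw [← hk]; exact mul_inv_cancel₀ hk0.ne')
    (fun i _ => Set.mem_Ioi.mpr (hM.eigenvalues_pos i))
  rw [hdet, Real.log_prod (fun i _ => (hM.eigenvalues_pos i).ne')]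
  have htr : M.trace = ∑ i, hM.1.eigenvalues i := aux_trace_eq_sum_eig hM.1
  rw [htr]
  have h1 : ∑ i, Real.log (hM.1.eigenvalues i) = k * ∑ i : m, k⁻¹ • Real.log (hM.1.eigenvalues i) := by
    rw [Finset.mul_sum]
    congr 1; ext i
    simp [smul_eq_mul]
    field_simp
  rw [h1]
  have h2 : (∑ i : m, hM.1.eigenvalues i) / k = ∑ i : m, k⁻¹ • hM.1.eigenvalues i := by
    rw [div_eq_inv_mul, Finset.mul_sum]
    simp [smul_eq_mul]
  rw [h2]
  exact mul_le_mul_of_nonneg_left hjensen hk0.le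

theorem stmt1 {n : ℕ} (T : ℕ) (g : ℕ → (Fin n → ℝ)) (G ε : ℝ) (hε : 0 < ε)
    (hG : ∀ t, Real.sqrt (g t ⬝ᵥ g t) ≤ G)
    (A : ℕ → Matrix (Fin n) (Fin n) ℝ)
    (hA0 : A 0 = ε • (1 : Matrix (Fin n) (Fin n) ℝ))
    (hAt : ∀ t : ℕ, A (t+1) = A t + Matrix.vecMulVec (g (t+1)) (g (t+1))) :
    ∑ t ∈ Finset.Icc 1 T, g t ⬝ᵥ (A t)⁻¹.mulVec (g t) ≤
      n * Real.log (1 + T * G^2 / (n * ε)) := by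
  rcases Nat.eq_zero_or_pos n with hn | hn
  · subst hn
    have hz : ∀ t ∈ Finset.Icc 1 T, g t ⬝ᵥ (A t)⁻¹.mulVec (g t) = 0 := by
      intro t _
      simp [dotProduct]
    rw [Finset.sum_eq_zero hz]
    simp
  haveI : NeZero n := ⟨hn.ne'⟩
  have hnR : (0:ℝ) < n := by exact_mod_cast hn
  have hG0 : 0 ≤ G := le_trans (Real.sqrt_nonneg _) (hG 0)
  have hggnn : ∀ t, 0 ≤ g t ⬝ᵥ g t := fun t =>
    Finset.sum_nonneg fun i _ => mul_self_nonneg _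
  have hgg : ∀ t, g t ⬝ᵥ g t ≤ G^2 := by
    intro t
    calc g t ⬝ᵥ g t = Real.sqrt (g t ⬝ᵥ g t) ^ 2 := (Real.sq_sqrt (hggnn t)).symm
      _ ≤ G ^ 2 := by
          apply pow_le_pow_left₀ (Real.sqrt_nonneg _) (hG t)
  -- positive semidefiniteness of the rank-one updates
  have hvv : ∀ t, (Matrix.vecMulVec (g t) (g t)).PosSemidef := by
    intro t
    have h : Matrix.vecMulVec (g t) (g t) = (Matrix.replicateRow (Fin 1) (g t))ᴴ * Matrix.replicateRow (Fin 1) (g t) := by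
      rw [Matrix.conjTranspose_replicateRow, Matrix.vecMulVec_eq (Fin 1)]
      simp
      rfl
    rw [h]
    exact Matrix.posSemidef_conjTranspose_mul_self _
  -- all A t are positive definite
  have hpos : ∀ t, (A t).PosDef := by
    intro t
    induction t with
    | zero =>
      rw [hA0, Matrix.smul_one_eq_diagonal]
      exact Matrix.posDef_diagonal_iff.mpr fun i => hε
    | succ t ih =>
      rw [hAt t]
      exact ih.add_posSemidef (hvv (t+1))
  have hdetpos : ∀ t, 0 < (A t).det := fun t => (hpos t).det_pos
  -- key: value of the per-step quadratic form
  have key : ∀ t : ℕ, g (t+1) ⬝ᵥ (A (t+1))⁻¹.mulVec (g (t+1))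
      = 1 - (A t).det / (A (t+1)).det := by
    intro t
    have hBd : (A (t+1)).det ≠ 0 := (hdetpos (t+1)).ne'
    have hBdet : IsUnit (A (t+1)).det := hBd.isUnit
    have hneg : Matrix.replicateCol (Fin 1) (-(g (t+1))) * Matrix.replicateRow (Fin 1) (g (t+1))
        = - Matrix.vecMulVec (g (t+1)) (g (t+1)) := by
      erw [← Matrix.vecMulVec_eq (Fin 1)]
      ext i j
      simp [Matrix.vecMulVec_apply]
    have hAB : A t = A (t+1) + Matrix.replicateCol (Fin 1) (-(g (t+1))) * Matrix.replicateRow (Fin 1) (g (t+1)) := by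
      rw [hneg, hAt t]
      abel
    have hdl := Matrix.det_add_replicateCol_mul_replicateRow (ι := Fin 1) hBdet (-(g (t+1))) (g (t+1))
    erw [← hAB] at hdl
    have h2 : (A t).det / (A (t+1)).det = 1 - g (t+1) ⬝ᵥ (A (t+1))⁻¹.mulVec (g (t+1)) := by
      rw [hdl, Matrix.mul_assoc, ← Matrix.replicateCol_mulVec]
      simp only [Matrix.det_unique, Matrix.add_apply, Matrix.one_apply_eq,
        Matrix.replicateRow_mul_replicateCol_apply, Matrix.mulVec_neg, dotProduct_neg]
      rw [mul_comm, mul_div_assoc, div_self hBd, mul_one]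
      ring
    linarith
  -- per-step log bound
  have step : ∀ t : ℕ, g (t+1) ⬝ᵥ (A (t+1))⁻¹.mulVec (g (t+1))
      ≤ Real.log (A (t+1)).det - Real.log (A t).det := by
    intro t
    rw [key t]
    have hq : 0 < (A t).det / (A (t+1)).det := div_pos (hdetpos t) (hdetpos (t+1))
    have := Real.log_le_sub_one_of_pos hq
    rw [Real.log_div (hdetpos t).ne' (hdetpos (t+1)).ne'] at this
    linarith
  -- telescoping
  have hIcc : ∀ k : ℕ, Finset.Icc 1 (k+1) = insert (k+1) (Finset.Icc 1 k) := by
    intro k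
    ext x
    simp only [Finset.mem_Icc, Finset.mem_insert]
    omega
  have tele : ∀ k : ℕ, ∑ t ∈ Finset.Icc 1 k, g t ⬝ᵥ (A t)⁻¹.mulVec (g t)
      ≤ Real.log (A k).det - Real.log (A 0).det := by
    intro k
    induction k with
    | zero => simp
    | succ k ih =>
      rw [hIcc k, Finset.sum_insert (by simp)]
      have := step k
      linarith
  -- trace bound
  have htr : ∀ k : ℕ, (A k).trace = n * ε + ∑ t ∈ Finset.Icc 1 k, (g t ⬝ᵥ g t) := by
    intro k
    induction k with
    | zero =>
      simp [hA0, Matrix.trace_smul, Matrix.trace_one, mul_comm]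
    | succ k ih =>
      rw [hAt k, Matrix.trace_add, ih, hIcc k, Finset.sum_insert (by simp)]
      have : (Matrix.vecMulVec (g (k+1)) (g (k+1))).trace = g (k+1) ⬝ᵥ g (k+1) := by
        simp [Matrix.trace, Matrix.diag, Matrix.vecMulVec_apply, dotProduct]
      rw [this]
      ring
  have htrle : (A T).trace ≤ n * ε + T * G^2 := by
    rw [htr T]
    have : ∑ t ∈ Finset.Icc 1 T, (g t ⬝ᵥ g t) ≤ ∑ t ∈ Finset.Icc 1 T, G^2 :=
      Finset.sum_le_sum fun t _ => hgg t
    have hcard : ∑ t ∈ Finset.Icc 1 T, G^2 = T * G^2 := by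
      rw [Finset.sum_const, Nat.card_Icc]
      simp [nsmul_eq_mul]
    linarith [this, hcard ▸ this]
  have htrpos : (0:ℝ) < (A T).trace := by
    rw [htr T]
    have : (0:ℝ) ≤ ∑ t ∈ Finset.Icc 1 T, (g t ⬝ᵥ g t) :=
      Finset.sum_nonneg fun t _ => hggnn t
    nlinarith
  -- Jensen bound on log det
  have hcard : (Fintype.card (Fin n) : ℝ) = n := by simp
  have hld : Real.log (A T).det ≤ n * Real.log ((A T).trace / n) := by
    have := aux_log_det_le (hpos T)
    rwa [hcard] at this
  -- log det A 0
  have hld0 : Real.log (A 0).det = n * Real.log ε := by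
    rw [hA0, Matrix.det_smul, Matrix.det_one, mul_one, Real.log_pow]
    simp
  -- final arithmetic
  have harg : (A T).trace / n ≤ (1 + T * G^2 / (n * ε)) * ε := by
    have h1 : (1 + T * G^2 / (n * ε)) * ε = ε + T * G^2 / n := by
      field_simp
    rw [h1, div_le_iff₀ hnR]
    calc (A T).trace ≤ n * ε + T * G^2 := htrle
      _ = (ε + T * G^2 / n) * n := by field_simp
  have hargpos : (0:ℝ) < (A T).trace / n := div_pos htrpos hnR
  have hfac : (0:ℝ) < 1 + T * G^2 / (n * ε) := by positivity
  have hlog : Real.log ((A T).trace / n) ≤ Real.log (1 + T * G^2 / (n * ε)) + Real.log ε := by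
    calc Real.log ((A T).trace / n) ≤ Real.log ((1 + T * G^2 / (n * ε)) * ε) :=
          Real.log_le_log hargpos harg
      _ = Real.log (1 + T * G^2 / (n * ε)) + Real.log ε := Real.log_mul hfac.ne' hε.ne'
  have hT := tele T
  have hmul : n * Real.log ((A T).trace / n)
      ≤ n * (Real.log (1 + T * G^2 / (n * ε)) + Real.log ε) :=
    mul_le_mul_of_nonneg_left hlog hnR.le
  calc ∑ t ∈ Finset.Icc 1 T, g t ⬝ᵥ (A t)⁻¹.mulVec (g t)
      ≤ Real.log (A T).det - Real.log (A 0).det := hT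
    _ ≤ n * Real.log ((A T).trace / n) - n * Real.log ε := by rw [← hld0] at *; linarith
    _ ≤ n * Real.log (1 + T * G^2 / (n * ε)) := by nlinarith [hmul]
end

section
/- Under the assumptions of the per-step lemma (α-exp-concave losses f_t with gradient bound G on a convex set of diameter D, η = (1/2)min{α, 1/(4GD)}, ε = 1/(η²D²), and the regularized Newton-step updates w_{t+1}), the regret ∑_{t=1}^T ( f_t(w_t) + λr(w_t) − f_t(w_*) − λr(w_*) ) ≤ C·log T + C' for constants C, C' depending only on n, α, G, D, λ, and sup_B r, for every w_* ∈ B and all T ≥ 1. -/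
open Matrix

section AuxCAPE
open Filter
variable {n : ℕ}

lemma my_dot_self_nonneg (v : Fin n → ℝ) : 0 ≤ v ⬝ᵥ v :=
  Finset.sum_nonneg fun i _ => mul_self_nonneg (v i)

lemma my_dot_self_eq_zero {v : Fin n → ℝ} (h : v ⬝ᵥ v = 0) : v = 0 := by
  funext i
  have hall := (Finset.sum_eq_zero_iff_of_nonneg (fun j _ => mul_self_nonneg (v j))).1 h
  have := hall i (Finset.mem_univ i)
  exact mul_self_eq_zero.1 this

lemma my_log_quad {u : ℝ} (h1 : -(1/4) ≤ u) (h2 : u ≤ 1/4) :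
    Real.log (1+u) ≤ u - u^2/4 := by
  have h0 : (0:ℝ) < 1 + u := by linarith
  rw [Real.log_le_iff_le_exp h0]
  set x : ℝ := (u - u^2/4)/4 with hx
  have hx1 : 0 ≤ 1 + x := by rw [hx]; nlinarith
  have he : 1 + x ≤ Real.exp x := by linarith [Real.add_one_le_exp x]
  have h4 : (1+x)^4 ≤ (Real.exp x)^4 := pow_le_pow_left₀ hx1 he 4
  have hexp4 : (Real.exp x)^4 = Real.exp (u - u^2/4) := by
    rw [← Real.exp_nat_mul]; congr 1; rw [hx]; ring
  have hpoly : 1 + u ≤ (1+x)^4 := by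
    rw [hx]
    nlinarith [sq_nonneg u, sq_nonneg (u*(4-u)), sq_nonneg (u^2),
      mul_nonneg (by linarith : (0:ℝ) ≤ 1/4 + u) (by linarith : (0:ℝ) ≤ 1/4 - u),
      sq_nonneg (u*(1+u)), sq_nonneg (u*(1-u))]
  calc 1 + u ≤ (1+x)^4 := hpoly
    _ ≤ (Real.exp x)^4 := h4
    _ = Real.exp (u - u^2/4) := hexp4

lemma my_log_div_mono {a β αa : ℝ} (hβ : 0 < β) (hβα : β ≤ αa) (h : 0 < 1 + αa*a) :
    Real.log (1+αa*a)/αa ≤ Real.log (1+β*a)/β := by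
  have hα : 0 < αa := lt_of_lt_of_le hβ hβα
  have hθ1 : β/αa ≤ 1 := (div_le_one hα).2 hβα
  have hθ0 : 0 ≤ β/αa := le_of_lt (div_pos hβ hα)
  have hs : -1 ≤ αa*a := by linarith
  have hbern := rpow_one_add_le_one_add_mul_self hs hθ0 hθ1
  have hpos : (0:ℝ) < (1 + αa*a) ^ (β/αa) := Real.rpow_pos_of_pos h _
  have h1βa : (1:ℝ) + β/αa * (αa*a) = 1 + β*a := by field_simp
  have hβa : 0 < 1 + β*a := by rw [← h1βa]; exact lt_of_lt_of_le hpos hbern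
  have hlog : Real.log ((1 + αa*a) ^ (β/αa)) ≤ Real.log (1+β*a) := by
    apply Real.log_le_log hpos; rw [← h1βa]; exact hbern
  rw [Real.log_rpow h] at hlog
  rw [div_le_div_iff₀ hα hβ]
  calc Real.log (1+αa*a) * β = (β/αa * Real.log (1+αa*a)) * αa := by field_simp
    _ ≤ Real.log (1+β*a) * αa := mul_le_mul_of_nonneg_right hlog (le_of_lt hα)

lemma my_concave_tangent {n : ℕ} {B : Set (Fin n → ℝ)} {h : (Fin n → ℝ) → ℝ}
    (hc : ConcaveOn ℝ B h) {y : Fin n → ℝ} (hy : y ∈ B)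
    {L : (Fin n → ℝ) →L[ℝ] ℝ} (hd : HasFDerivAt h L y)
    {x : Fin n → ℝ} (hx : x ∈ B) : h x ≤ h y + L (x - y) := by
  -- φ s = h (y + s • (x - y))
  set φ : ℝ → ℝ := fun s => h (y + s • (x - y)) with hφ
  have hγ : HasDerivAt (fun s : ℝ => y + s • (x - y)) (x - y) 0 := by
    simpa using ((hasDerivAt_id (0:ℝ)).smul_const (x - y)).const_add y
  have hφd : HasDerivAt φ (L (x - y)) 0 := by
    have h0 : HasFDerivAt h L (y + (0:ℝ) • (x - y)) := by simpa using hd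
    have := h0.comp_hasDerivAt (0:ℝ) hγ
    simpa [hφ, Function.comp_def] using this
  have hslope : Tendsto (slope φ 0) (nhdsWithin 0 (Set.Ioi 0)) (nhds (L (x - y))) :=
    ((hasDerivAt_iff_tendsto_slope.1 hφd).mono_left
      (nhdsWithin_mono _ (by intro s hs; exact ne_of_gt hs)))
  have hev : ∀ᶠ s in nhdsWithin (0:ℝ) (Set.Ioi 0), h x - h y ≤ slope φ 0 s := by
    filter_upwards [Ioo_mem_nhdsGT_of_mem (Set.mem_Ico.2 ⟨le_refl _, zero_lt_one⟩)] with s hs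
    obtain ⟨hs0, hs1⟩ := hs
    have hmem : y + s • (x - y) ∈ B := by
      have := hc.1 hy hx (by linarith : (0:ℝ) ≤ 1 - s) (le_of_lt hs0) (by ring)
      convert this using 1
      ext i; simp [smul_sub]; ring
    have hcc := hc.2 hy hx (by linarith : (0:ℝ) ≤ 1 - s) (le_of_lt hs0) (by ring)
    have heq : (1 - s) • y + s • x = y + s • (x - y) := by
      ext i; simp [smul_sub]; ring
    rw [heq] at hcc
    have : s * (h x - h y) ≤ φ s - φ 0 := by
      simp only [hφ, smul_eq_mul] at hcc ⊢
      simp only [zero_smul, add_zero]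
      nlinarith [hcc]
    have hsl : slope φ 0 s = (φ s - φ 0)/s := by
      rw [slope_def_field]; ring_nf
    rw [hsl, le_div_iff₀ hs0]
    linarith
  have := ge_of_tendsto hslope hev
  linarith


-- symmetry of dot-mulVec
lemma my_dot_symm (M : Matrix (Fin n) (Fin n) ℝ) (hM : Mᵀ = M) (x y : Fin n → ℝ) :
    x ⬝ᵥ M.mulVec y = y ⬝ᵥ M.mulVec x := by
  rw [Matrix.dotProduct_mulVec, ← Matrix.mulVec_transpose, hM, dotProduct_comm]

-- quadratic expansion
lemma my_quad_expand (M : Matrix (Fin n) (Fin n) ℝ) (hM : Mᵀ = M) (x y : Fin n → ℝ) (c : ℝ) :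
    (x + c • y) ⬝ᵥ M.mulVec (x + c • y)
      = x ⬝ᵥ M.mulVec x + 2*c*(x ⬝ᵥ M.mulVec y) + c^2*(y ⬝ᵥ M.mulVec y) := by
  rw [Matrix.mulVec_add, Matrix.mulVec_smul]
  simp only [dotProduct_add, add_dotProduct, smul_dotProduct,
    dotProduct_smul, smul_eq_mul]
  rw [my_dot_symm M hM y x]
  ring

-- vecMulVec quadratic form
lemma my_vecMulVec_quad (v x : Fin n → ℝ) :
    x ⬝ᵥ (Matrix.vecMulVec v v).mulVec x = (v ⬝ᵥ x)^2 := by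
  simp only [dotProduct, Matrix.mulVec, Matrix.vecMulVec_apply, dotProduct,
    Finset.mul_sum, Finset.sum_mul, sq]
  congr 1; ext i
  congr 1; ext j
  ring

-- Step D: completing the square
lemma my_complete_square (M : Matrix (Fin n) (Fin n) ℝ) (hM : Mᵀ = M)
    (hunit : IsUnit M.det) (hpsd : ∀ z : Fin n → ℝ, 0 ≤ z ⬝ᵥ M.mulVec z)
    {η : ℝ} (hη : 0 < η) (g v : Fin n → ℝ) :
    -(g ⬝ᵥ v) - η*((1/2) * (v ⬝ᵥ M.mulVec v)) ≤ (1/(2*η)) * (g ⬝ᵥ M⁻¹.mulVec g) := by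
  set c : Fin n → ℝ := M⁻¹.mulVec g with hc
  have hMc : M.mulVec c = g := by
    rw [hc, Matrix.mulVec_mulVec, Matrix.mul_nonsing_inv _ hunit, Matrix.one_mulVec]
  have key := hpsd (v + η⁻¹ • c)
  rw [my_quad_expand M hM v c η⁻¹] at key
  have h1 : v ⬝ᵥ M.mulVec c = v ⬝ᵥ g := by rw [hMc]
  have h2 : c ⬝ᵥ M.mulVec c = c ⬝ᵥ g := by rw [hMc]
  rw [h1, h2] at key
  have hvg : v ⬝ᵥ g = g ⬝ᵥ v := dotProduct_comm _ _
  have hcg : c ⬝ᵥ g = g ⬝ᵥ c := dotProduct_comm _ _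
  rw [hvg, hcg] at key
  have hη' : η ≠ 0 := ne_of_gt hη
  have hmul := mul_nonneg (le_of_lt hη) key
  have expand : η * (v ⬝ᵥ M.mulVec v + 2*η⁻¹ * g ⬝ᵥ v + η⁻¹^2 * g ⬝ᵥ c)
      = 2 * ((1/(2*η)) * (g ⬝ᵥ c) - (-(g ⬝ᵥ v) - η*((1/2) * (v ⬝ᵥ M.mulVec v)))) := by
    field_simp; ring
  rw [expand] at hmul
  linarith


-- determinant step: matrix determinant lemma applied
lemma my_det_step (M : Matrix (Fin n) (Fin n) ℝ) (g : Fin n → ℝ)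
    (hN : (M + Matrix.vecMulVec g g)ᵀ = M + Matrix.vecMulVec g g)
    (hMdet : 0 < M.det) (hNdet : 0 < (M + Matrix.vecMulVec g g).det) :
    g ⬝ᵥ (M + Matrix.vecMulVec g g)⁻¹.mulVec g
      ≤ Real.log (M + Matrix.vecMulVec g g).det - Real.log M.det := by
  set N := M + Matrix.vecMulVec g g with hNdef
  have hNunit : IsUnit N.det := hNdet.ne'.isUnit
  have hdet : M.det = N.det * (1 - g ⬝ᵥ N⁻¹.mulVec g) := by
    have key := Matrix.det_add_replicateCol_mul_replicateRow (ι := Unit) hNunit g (-g)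
    have hNM : N + Matrix.replicateCol Unit g * Matrix.replicateRow Unit (-g) = M := by
      rw [← Matrix.vecMulVec_eq]
      have : Matrix.vecMulVec g (-g) = - Matrix.vecMulVec g g := by
        ext i j; simp [Matrix.vecMulVec_apply]
      rw [this, hNdef]; abel
    rw [hNM] at key
    rw [key]
    congr 1
    have hsym : (N⁻¹)ᵀ = N⁻¹ := by rw [Matrix.transpose_nonsing_inv, hN]
    have hrow : Matrix.replicateRow Unit (-g) * N⁻¹ = Matrix.replicateRow Unit ((-g) ᵥ* N⁻¹) := by
      rw [Matrix.replicateRow_vecMul]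
    rw [hrow, Matrix.det_unique]
    simp only [Matrix.add_apply, Matrix.one_apply_eq, Matrix.replicateRow_mul_replicateCol_apply]
    rw [Matrix.neg_vecMul]
    rw [show g ᵥ* N⁻¹ = g ᵥ* (N⁻¹)ᵀ from by rw [hsym], Matrix.vecMul_transpose]
    rw [neg_dotProduct, dotProduct_comm]
    ring
  have hfrac : 0 < M.det / N.det := div_pos hMdet hNdet
  have hlog := Real.log_le_sub_one_of_pos hfrac
  rw [Real.log_div hMdet.ne' hNdet.ne'] at hlog
  have : g ⬝ᵥ N⁻¹.mulVec g = 1 - M.det / N.det := by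
    rw [hdet]
    field_simp
    ring
  rw [this]; linarith


lemma my_trace_eq_sum_eigen (M : Matrix (Fin n) (Fin n) ℝ) (hM : M.IsHermitian) :
    M.trace = ∑ i, hM.eigenvalues i := by
  nth_rewrite 1 [hM.spectral_theorem]
  rw [Unitary.conjStarAlgAut_apply]
  rw [Matrix.trace_mul_cycle]
  rw [show (star (Matrix.IsHermitian.eigenvectorUnitary hM) : Matrix (Fin n) (Fin n) ℝ) *
      (Matrix.IsHermitian.eigenvectorUnitary hM : Matrix (Fin n) (Fin n) ℝ) = 1 from
    Unitary.coe_star_mul_self _]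
  rw [one_mul, Matrix.trace_diagonal]
  simp

lemma my_det_le_trace_pow (M : Matrix (Fin n) (Fin n) ℝ) (hM : M.PosSemidef) :
    M.det ≤ M.trace ^ n := by
  have hH := hM.1
  rw [hH.det_eq_prod_eigenvalues, my_trace_eq_sum_eigen M hH]
  have hnn : ∀ i, 0 ≤ hH.eigenvalues i := hM.eigenvalues_nonneg
  have hle : ∀ i : Fin n, hH.eigenvalues i ≤ ∑ j, hH.eigenvalues j := by
    intro i
    exact Finset.single_le_sum (fun j _ => hnn j) (Finset.mem_univ i)
  calc (∏ i, (hH.eigenvalues i : ℝ)) ≤ ∏ _i : Fin n, (∑ j, hH.eigenvalues j) :=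
        Finset.prod_le_prod (fun i _ => hnn i) (fun i _ => hle i)
    _ = (∑ j, hH.eigenvalues j) ^ n := by
        rw [Finset.prod_const, Finset.card_univ, Fintype.card_fin]
end AuxCAPE
set_option maxHeartbeats 2000000 in
theorem stmt5 {n : ℕ} (B : Set (Fin n → ℝ)) (hB : Convex ℝ B)
    (f : ℕ → (Fin n → ℝ) → ℝ) (r : (Fin n → ℝ) → ℝ)
    (gradf : ℕ → (Fin n → ℝ) → (Fin n → ℝ))
    (α D G η ε lam Rbound : ℝ) (hα : 0 < α) (hlam : 0 ≤ lam)
    (hexp : ∀ t, ConcaveOn ℝ B (fun x => Real.exp (-α * f t x)))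
    (hdiam : ∀ x ∈ B, ∀ y ∈ B, Real.sqrt ((x - y) ⬝ᵥ (x - y)) ≤ D)
    (hgrad : ∀ t, ∀ x ∈ B, ∃ L : (Fin n → ℝ) →L[ℝ] ℝ,
      HasFDerivAt (f t) L x ∧ ∀ y, L y = gradf t x ⬝ᵥ y)
    (hG : ∀ t, ∀ x ∈ B, Real.sqrt (gradf t x ⬝ᵥ gradf t x) ≤ G)
    (hη : η = (1/2) * min α (1/(4*G*D))) (hε : ε = 1/(η^2 * D^2))
    (hr : ConvexOn ℝ B r) (hr0 : ∀ x ∈ B, 0 ≤ r x) (hrbd : ∀ x ∈ B, r x ≤ Rbound)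
    (w : ℕ → (Fin n → ℝ)) (hw : ∀ t, w t ∈ B) (hr1 : r (w 1) = 0)
    (A : ℕ → Matrix (Fin n) (Fin n) ℝ)
    (hA0 : A 0 = ε • (1 : Matrix (Fin n) (Fin n) ℝ))
    (hA : ∀ t : ℕ, 1 ≤ t →
      A t = A (t-1) + Matrix.vecMulVec (gradf t (w t)) (gradf t (w t)))
    (hmin : ∀ t : ℕ, 1 ≤ t → ∀ u ∈ B,
      gradf t (w t) ⬝ᵥ (w (t+1) - w t) + lam * r (w (t+1))
          + η * ((1/2) * ((w (t+1) - w t) ⬝ᵥ (A t).mulVec (w (t+1) - w t)))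
        ≤ gradf t (w t) ⬝ᵥ (u - w t) + lam * r u
          + η * ((1/2) * ((u - w t) ⬝ᵥ (A t).mulVec (u - w t)))) :
    ∃ C C' : ℝ, ∀ wstar ∈ B, ∀ T : ℕ, 1 ≤ T →
      ∑ t ∈ Finset.Icc 1 T, (f t (w t) + lam * r (w t) - f t wstar - lam * r wstar)
        ≤ C * Real.log T + C' := by
  classical
  set g : ℕ → (Fin n → ℝ) := fun t => gradf t (w t) with hgdef
  have hD0 : 0 ≤ D := le_trans (Real.sqrt_nonneg _) (hdiam (w 1) (hw 1) (w 1) (hw 1))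
  have hG0 : 0 ≤ G := le_trans (Real.sqrt_nonneg _) (hG 1 (w 1) (hw 1))
  have hdot_le : ∀ x ∈ B, ∀ y ∈ B, (x - y) ⬝ᵥ (x - y) ≤ D^2 := by
    intro x hx y hy
    have h1 := hdiam x hx y hy
    have h2 := my_dot_self_nonneg (x - y)
    nlinarith [Real.sq_sqrt h2, Real.sqrt_nonneg ((x - y) ⬝ᵥ (x - y))]
  have hgg_le : ∀ t, g t ⬝ᵥ g t ≤ G^2 := by
    intro t
    have h1 := hG t (w t) (hw t)
    have h2 := my_dot_self_nonneg (g t)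
    nlinarith [Real.sq_sqrt h2, Real.sqrt_nonneg (g t ⬝ᵥ g t)]
  -- exp-concavity tangent inequality
  have hexpineq : ∀ t x, x ∈ B →
      Real.exp (-α * f t x) ≤ Real.exp (-α * f t (w t)) * (1 + α * (g t ⬝ᵥ (w t - x))) := by
    intro t x hx
    obtain ⟨L, hL, hLy⟩ := hgrad t (w t) (hw t)
    have hd1 : HasFDerivAt (fun y => -α * f t y) ((-α) • L) (w t) := hL.const_mul (-α)
    have hd2 : HasFDerivAt (fun y => Real.exp (-α * f t y))
        (Real.exp (-α * f t (w t)) • ((-α) • L)) (w t) := hd1.exp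
    have htan := my_concave_tangent (hexp t) (hw t) hd2 hx
    have heval : (Real.exp (-α * f t (w t)) • ((-α) • L)) (x - w t)
        = Real.exp (-α * f t (w t)) * (α * (g t ⬝ᵥ (w t - x))) := by
      simp only [ContinuousLinearMap.smul_apply, smul_eq_mul]
      rw [hLy]
      have : g t ⬝ᵥ (x - w t) = -(g t ⬝ᵥ (w t - x)) := by
        rw [← dotProduct_neg]; congr 1; abel
      rw [this]; ring
    rw [heval] at htan
    calc Real.exp (-α * f t x) ≤ Real.exp (-α * f t (w t))
          + Real.exp (-α * f t (w t)) * (α * (g t ⬝ᵥ (w t - x))) := htan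
      _ = Real.exp (-α * f t (w t)) * (1 + α * (g t ⬝ᵥ (w t - x))) := by ring
  have hfged : ∀ t x, x ∈ B → 0 < 1 + α * (g t ⬝ᵥ (w t - x))
      ∧ f t (w t) - f t x ≤ Real.log (1 + α * (g t ⬝ᵥ (w t - x))) / α := by
    intro t x hx
    have h1 := hexpineq t x hx
    have hp1 : (0:ℝ) < Real.exp (-α * f t x) := Real.exp_pos _
    have hp2 : (0:ℝ) < Real.exp (-α * f t (w t)) := Real.exp_pos _
    have hpos : 0 < 1 + α * (g t ⬝ᵥ (w t - x)) := by
      by_contra hc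
      push_neg at hc
      nlinarith
    refine ⟨hpos, ?_⟩
    have hlog := Real.log_le_log hp1 h1
    rw [Real.log_exp, Real.log_mul hp2.ne' hpos.ne', Real.log_exp] at hlog
    rw [le_div_iff₀ hα]
    linarith
  -- Case D = 0
  by_cases hDz : D = 0
  · refine ⟨0, 0, ?_⟩
    intro wstar hws T hT
    have hall : ∀ x ∈ B, x = wstar := by
      intro x hx
      have h1 := hdiam x hx wstar hws
      rw [hDz] at h1
      have h2 := my_dot_self_nonneg (x - wstar)
      have h3 : Real.sqrt ((x - wstar) ⬝ᵥ (x - wstar)) = 0 :=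
        le_antisymm h1 (Real.sqrt_nonneg _)
      have h4 : (x - wstar) ⬝ᵥ (x - wstar) = 0 := by
        nlinarith [Real.sq_sqrt h2]
      have := my_dot_self_eq_zero h4
      funext i
      have := congrFun this i
      simpa [sub_eq_zero] using this
    have : ∀ t ∈ Finset.Icc 1 T,
        f t (w t) + lam * r (w t) - f t wstar - lam * r wstar = 0 := by
      intro t _
      rw [hall (w t) (hw t)]
      ring
    rw [Finset.sum_congr rfl this]
    simp
  -- Case G = 0
  by_cases hGz : G = 0
  · refine ⟨0, 0, ?_⟩
    intro wstar hws T hT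
    have hgzero : ∀ t, g t = 0 := by
      intro t
      apply my_dot_self_eq_zero
      have := hgg_le t
      rw [hGz] at this
      have h2 := my_dot_self_nonneg (g t)
      linarith [this]
    have hηz : η = 0 := by
      rw [hη, hGz]
      norm_num
      exact hα.le
    have hterm : ∀ t, 1 ≤ t →
        f t (w t) + lam * r (w t) - f t wstar - lam * r wstar ≤ 0 := by
      intro t ht
      have hf : f t (w t) - f t wstar ≤ 0 := by
        have := (hfged t wstar hws).2
        rw [hgzero t] at this
        simpa using this
      have hrpart : lam * r (w t) ≤ lam * r wstar := by
        rcases Nat.lt_or_ge t 2 with h2 | h2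
        · interval_cases t
          rw [hr1, mul_zero]
          exact mul_nonneg hlam (hr0 wstar hws)
        · have ht1 : 1 ≤ t - 1 := by omega
          have := hmin (t-1) ht1 wstar hws
          have htt : t - 1 + 1 = t := by omega
          rw [htt, hηz] at this
          have hgz' : gradf (t-1) (w (t-1)) = 0 := hgzero (t-1)
          rw [hgz'] at this
          simpa using this
      linarith
    calc ∑ t ∈ Finset.Icc 1 T, (f t (w t) + lam * r (w t) - f t wstar - lam * r wstar)
        ≤ 0 := Finset.sum_nonpos (fun t ht => hterm t (Finset.mem_Icc.1 ht).1)
      _ = 0 * Real.log T + 0 := by ring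
  -- Main case: D > 0, G > 0
  have hDp : 0 < D := lt_of_le_of_ne hD0 (Ne.symm hDz)
  have hGp : 0 < G := lt_of_le_of_ne hG0 (Ne.symm hGz)
  have hGD : 0 < 4*G*D := by positivity
  have hβpos : 0 < min α (1/(4*G*D)) := lt_min hα (by positivity)
  have hηp : 0 < η := by rw [hη]; positivity
  have hηα : 2*η ≤ α := by rw [hη]; simpa using min_le_left α (1/(4*G*D))
  have hηGD : 2*η*(G*D) ≤ 1/4 := by
    have h1 : 2*η ≤ 1/(4*G*D) := by rw [hη]; simpa using min_le_right α (1/(4*G*D))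
    have h2 : (1/(4*G*D))*(G*D) = 1/4 := by field_simp
    calc 2*η*(G*D) ≤ (1/(4*G*D))*(G*D) :=
          mul_le_mul_of_nonneg_right h1 (by positivity)
      _ = 1/4 := h2
  have hεp : 0 < ε := by rw [hε]; positivity
  -- Cauchy-Schwarz
  have hCS : ∀ t x, x ∈ B → |g t ⬝ᵥ (w t - x)| ≤ G*D := by
    intro t x hx
    have hcs := Finset.sum_mul_sq_le_sq_mul_sq Finset.univ (g t) (w t - x)
    have h1 : (g t ⬝ᵥ (w t - x))^2 ≤ G^2 * D^2 := by
      have e1 : g t ⬝ᵥ (w t - x) = ∑ i, g t i * (w t - x) i := rfl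
      have e2 : g t ⬝ᵥ g t = ∑ i, (g t i)^2 := by
        simp [dotProduct, sq]
      have e3 : (w t - x) ⬝ᵥ (w t - x) = ∑ i, ((w t - x) i)^2 := by
        simp [dotProduct, sq]
      have h4 := hgg_le t
      have h5 := hdot_le (w t) (hw t) x hx
      rw [e2] at h4; rw [e3] at h5
      have h6 : (0:ℝ) ≤ ∑ i, ((w t - x) i)^2 := Finset.sum_nonneg fun i _ => sq_nonneg _
      have h7 : (0:ℝ) ≤ ∑ i, (g t i)^2 := Finset.sum_nonneg fun i _ => sq_nonneg _
      calc (g t ⬝ᵥ (w t - x))^2 = (∑ i, g t i * (w t - x) i)^2 := by rw [e1]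
        _ ≤ (∑ i, (g t i)^2) * (∑ i, ((w t - x) i)^2) := hcs
        _ ≤ G^2 * D^2 := by nlinarith
    have : |g t ⬝ᵥ (w t - x)| = Real.sqrt ((g t ⬝ᵥ (w t - x))^2) :=
      (Real.sqrt_sq_eq_abs _).symm
    rw [this]
    calc Real.sqrt ((g t ⬝ᵥ (w t - x))^2) ≤ Real.sqrt (G^2*D^2) := Real.sqrt_le_sqrt h1
      _ = G*D := by rw [show G^2*D^2 = (G*D)^2 by ring, Real.sqrt_sq (by positivity)]
  -- Step A
  have hstepA : ∀ t x, x ∈ B → f t (w t) - f t x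
      ≤ (g t ⬝ᵥ (w t - x)) - (η/2)*(g t ⬝ᵥ (w t - x))^2 := by
    intro t x hx
    obtain ⟨hpos, hlog⟩ := hfged t x hx
    set a := g t ⬝ᵥ (w t - x) with hadef
    have hmono := my_log_div_mono (a := a) (β := 2*η) (αa := α) (by positivity) hηα
      (by rw [mul_comm] at hpos ⊢; exact hpos)
    have habs := hCS t x hx
    obtain ⟨hal, har⟩ := abs_le.1 habs
    have h2η : (0:ℝ) ≤ 2*η := by positivity
    have hmu2 := mul_le_mul_of_nonneg_left har h2η
    have hmu1 := mul_le_mul_of_nonneg_left hal h2η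
    have hu1 : -(1/4) ≤ 2*η*a := by
      have he : 2*η*(-(G*D)) = -(2*η*(G*D)) := by ring
      rw [he] at hmu1
      linarith
    have hu2 : 2*η*a ≤ 1/4 := le_trans hmu2 hηGD
    have hquad := my_log_quad hu1 hu2
    have hfin : Real.log (1 + 2*η*a) / (2*η) ≤ a - (η/2)*a^2 := by
      rw [div_le_iff₀ (by positivity : (0:ℝ) < 2*η)]
      calc Real.log (1 + 2*η*a) ≤ 2*η*a - (2*η*a)^2/4 := hquad
        _ = (a - η/2*a^2)*(2*η) := by ring
    calc f t (w t) - f t x ≤ Real.log (1 + α*a) / α := hlog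
      _ ≤ Real.log (1 + 2*η*a) / (2*η) := hmono
      _ ≤ a - (η/2)*a^2 := hfin
  -- Matrix facts
  have hsymA : ∀ t, (A t)ᵀ = A t := by
    intro t
    induction t with
    | zero => rw [hA0]; rw [Matrix.transpose_smul, Matrix.transpose_one]
    | succ k ih =>
      rw [hA (k+1) (by omega)]
      simp only [Nat.add_sub_cancel]
      rw [Matrix.transpose_add, ih]
      congr 1
      ext i j
      simp [Matrix.vecMulVec_apply, Matrix.transpose_apply, mul_comm]
  have hQform : ∀ t x, x ⬝ᵥ (A t).mulVec x
      = ε*(x ⬝ᵥ x) + ∑ s ∈ Finset.Icc 1 t, (g s ⬝ᵥ x)^2 := by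
    intro t x
    induction t with
    | zero =>
      rw [hA0, Matrix.smul_mulVec, Matrix.one_mulVec, dotProduct_smul]
      simp
    | succ k ih =>
      rw [hA (k+1) (by omega)]
      simp only [Nat.add_sub_cancel]
      rw [Matrix.add_mulVec, dotProduct_add, ih, my_vecMulVec_quad]
      rw [Finset.sum_Icc_succ_top (by omega : 1 ≤ k+1)]
      ring
  have hpsd : ∀ t x, 0 ≤ x ⬝ᵥ (A t).mulVec x := by
    intro t x
    rw [hQform]
    have h1 : 0 ≤ ε*(x ⬝ᵥ x) := mul_nonneg hεp.le (my_dot_self_nonneg x)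
    have h2 : 0 ≤ ∑ s ∈ Finset.Icc 1 t, (g s ⬝ᵥ x)^2 :=
      Finset.sum_nonneg fun s _ => sq_nonneg _
    linarith
  have hherm : ∀ t, (A t).IsHermitian := by
    intro t
    have : (A t)ᴴ = (A t)ᵀ := by
      ext i j; simp [Matrix.conjTranspose_apply]
    rw [Matrix.IsHermitian, this, hsymA]
  have hpd : ∀ t, (A t).PosDef := by
    intro t
    refine Matrix.posDef_iff_dotProduct_mulVec.2 ⟨hherm t, fun x hx => ?_⟩
    have hstar : star x = x := by funext i; simp
    rw [hstar, hQform]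
    have h2 : 0 ≤ ∑ s ∈ Finset.Icc 1 t, (g s ⬝ᵥ x)^2 :=
      Finset.sum_nonneg fun s _ => sq_nonneg _
    have h3 : 0 < x ⬝ᵥ x := by
      rcases lt_or_eq_of_le (my_dot_self_nonneg x) with h | h
      · exact h
      · exact absurd (my_dot_self_eq_zero h.symm) hx
    nlinarith
  have hdetpos : ∀ t, 0 < (A t).det := fun t => (hpd t).det_pos
  -- first-order optimality (Step B)
  have hkey : ∀ t : ℕ, 1 ≤ t → ∀ u ∈ B,
      lam * r (w (t+1)) ≤ g t ⬝ᵥ (u - w (t+1)) + lam * r u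
        + η * ((w (t+1) - w t) ⬝ᵥ (A t).mulVec (u - w (t+1))) := by
    intro t ht u hu
    have hsM := hsymA t
    set p := w (t+1) with hpdef
    set q := w t with hqdef
    set M := A t with hMdef
    set d : (Fin n → ℝ) := u - p with hddef
    have hIoo : ∀ s ∈ Set.Ioo (0:ℝ) 1, lam * r p ≤ g t ⬝ᵥ d + lam * r u
        + η * ((p - q) ⬝ᵥ M.mulVec d) + η * (1/2) * s * (d ⬝ᵥ M.mulVec d) := by
      intro s hs
      obtain ⟨hs0, hs1⟩ := hs
      have he : (1-s) • p + s • u = p + s • d := by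
        funext i
        simp only [Pi.add_apply, Pi.smul_apply, smul_eq_mul, hddef, Pi.sub_apply]
        ring
      have husB : p + s • d ∈ B := by
        have hcomb := hB (hw (t+1)) hu (by linarith : (0:ℝ) ≤ 1 - s) (le_of_lt hs0) (by ring)
        rwa [he] at hcomb
      have hm := hmin t ht (p + s • d) husB
      have hsplit : p + s • d - q = (p - q) + s • d := by abel
      have hlin : g t ⬝ᵥ (p + s • d - q) = g t ⬝ᵥ (p - q) + s * (g t ⬝ᵥ d) := by
        rw [hsplit, dotProduct_add, dotProduct_smul, smul_eq_mul]
      have hquad : (p + s • d - q) ⬝ᵥ M.mulVec (p + s • d - q)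
          = (p-q) ⬝ᵥ M.mulVec (p-q) + 2*s*((p-q) ⬝ᵥ M.mulVec d) + s^2*(d ⬝ᵥ M.mulVec d) := by
        rw [hsplit]
        exact my_quad_expand M hsM _ _ s
      have hrconv : r (p + s • d) ≤ (1-s) * r p + s * r u := by
        have hc := hr.2 (hw (t+1)) hu (by linarith : (0:ℝ) ≤ 1 - s) (le_of_lt hs0) (by ring)
        rw [he] at hc
        simpa [smul_eq_mul] using hc
      have hlr : lam * r (p + s • d) ≤ lam * ((1-s) * r p + s * r u) :=
        mul_le_mul_of_nonneg_left hrconv hlam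
      rw [hlin, hquad] at hm
      have hm2 : (lam * r p) * s ≤ (g t ⬝ᵥ d + lam * r u
          + η * ((p - q) ⬝ᵥ M.mulVec d) + η * (1/2) * s * (d ⬝ᵥ M.mulVec d)) * s := by
        nlinarith [hm, hlr]
      exact (mul_le_mul_iff_left₀ hs0).1 hm2
    have hev : ∀ᶠ s in nhdsWithin (0:ℝ) (Set.Ioi 0), lam * r p ≤ g t ⬝ᵥ d + lam * r u
        + η * ((p - q) ⬝ᵥ M.mulVec d) + η * (1/2) * s * (d ⬝ᵥ M.mulVec d) := by
      filter_upwards [Ioo_mem_nhdsGT_of_mem (Set.mem_Ico.2 ⟨le_refl (0:ℝ), zero_lt_one⟩)] with s hs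
      exact hIoo s hs
    have htend : Filter.Tendsto (fun s : ℝ => g t ⬝ᵥ d + lam * r u
        + η * ((p - q) ⬝ᵥ M.mulVec d) + η * (1/2) * s * (d ⬝ᵥ M.mulVec d))
        (nhdsWithin 0 (Set.Ioi 0))
        (nhds (g t ⬝ᵥ d + lam * r u + η * ((p - q) ⬝ᵥ M.mulVec d)
          + η * (1/2) * 0 * (d ⬝ᵥ M.mulVec d))) := by
      apply Filter.Tendsto.mono_left _ nhdsWithin_le_nhds
      exact Continuous.tendsto (by continuity) 0
    have hlim := ge_of_tendsto htend hev
    simpa using hlim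
  -- determinant step
  have hdetstep : ∀ s : ℕ, g (s+1) ⬝ᵥ (A (s+1))⁻¹.mulVec (g (s+1))
      ≤ Real.log (A (s+1)).det - Real.log (A s).det := by
    intro s
    have hAs : A (s+1) = A s + Matrix.vecMulVec (g (s+1)) (g (s+1)) := by
      have := hA (s+1) (by omega)
      simpa using this
    have h1 := my_det_step (A s) (g (s+1)) (by rw [← hAs]; exact hsymA (s+1))
      (hdetpos s) (by rw [← hAs]; exact hdetpos (s+1))
    rw [← hAs] at h1
    exact h1
  -- trace formula
  have htrvv : ∀ v : Fin n → ℝ, (Matrix.vecMulVec v v).trace = v ⬝ᵥ v := by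
    intro v
    simp [Matrix.trace, Matrix.diag, Matrix.vecMulVec_apply, dotProduct]
  have htrace : ∀ t, (A t).trace = (n:ℝ)*ε + ∑ s ∈ Finset.Icc 1 t, (g s ⬝ᵥ g s) := by
    intro t
    induction t with
    | zero =>
      rw [hA0, Matrix.trace_smul, Matrix.trace_one]
      simp [smul_eq_mul, mul_comm]
    | succ k ih =>
      rw [hA (k+1) (by omega)]
      simp only [Nat.add_sub_cancel]
      rw [Matrix.trace_add, ih, htrvv, Finset.sum_Icc_succ_top (by omega : 1 ≤ k+1)]
      ring
  -- choose constants
  refine ⟨(n:ℝ)/(2*η), η*(1/2)*ε*D^2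
    + (1/(2*η))*((n:ℝ)*Real.log ((n:ℝ)*ε+G^2) - (n:ℝ)*Real.log ε), ?_⟩
  intro wstar hws T hT
  set Sf : ℕ → ℝ := fun s =>
    η*(1/2)*((wstar - w (s+1)) ⬝ᵥ (A s).mulVec (wstar - w (s+1))) with hSfdef
  set Lf : ℕ → ℝ := fun s => Real.log (A s).det with hLfdef
  have perstep : ∀ s : ℕ,
      f (s+1) (w (s+1)) + lam * r (w (s+1+1)) - f (s+1) wstar - lam * r wstar
        ≤ (Sf s - Sf (s+1)) + (1/(2*η))*(Lf (s+1) - Lf s) := by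
    intro s
    set t := s + 1 with htdef
    have ht : 1 ≤ t := by omega
    set M := A t with hMdef
    set a : ℝ := g t ⬝ᵥ (w t - wstar) with hadef
    set v1 : Fin n → ℝ := w (t+1) - w t with hv1def
    set dd : Fin n → ℝ := wstar - w (t+1) with hdddef
    set vq : Fin n → ℝ := wstar - w t with hvqdef
    have F1 := hstepA t wstar hws
    have F2 := hkey t ht wstar hws
    have F3 := my_complete_square M (hsymA t) (hdetpos t).ne'.isUnit (hpsd t) hηp (g t) v1
    have F4 := hdetstep s
    have F4' : (1/(2*η))*(g t ⬝ᵥ M⁻¹.mulVec (g t))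
        ≤ (1/(2*η))*(Lf (s+1) - Lf s) := by
      apply mul_le_mul_of_nonneg_left _ (by positivity : (0:ℝ) ≤ 1/(2*η))
      exact F4
    have hvq : vq = v1 + (1:ℝ) • dd := by
      rw [hv1def, hdddef, hvqdef, one_smul]; abel
    have F5 : vq ⬝ᵥ M.mulVec vq = v1 ⬝ᵥ M.mulVec v1
        + 2*(v1 ⬝ᵥ M.mulVec dd) + dd ⬝ᵥ M.mulVec dd := by
      rw [hvq]
      have := my_quad_expand M (hsymA t) v1 dd 1
      rw [this]; ring
    have hAs : A t = A s + Matrix.vecMulVec (g t) (g t) := by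
      have := hA t ht
      simpa [htdef] using this
    have F6 : vq ⬝ᵥ M.mulVec vq = vq ⬝ᵥ (A s).mulVec vq + a^2 := by
      rw [hMdef, hAs, Matrix.add_mulVec, dotProduct_add, my_vecMulVec_quad]
      congr 1
      have : g t ⬝ᵥ vq = -a := by
        rw [hadef, hvqdef, dotProduct_sub, dotProduct_sub]
        ring
      rw [this]; ring
    have F7 : a + (g t ⬝ᵥ v1) + (g t ⬝ᵥ dd) = 0 := by
      rw [hadef, hv1def, hdddef]
      simp only [dotProduct_sub]
      ring
    have E5 : η*(1/2)*(vq ⬝ᵥ M.mulVec vq) = η*(1/2)*(v1 ⬝ᵥ M.mulVec v1)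
        + η*(v1 ⬝ᵥ M.mulVec dd) + η*(1/2)*(dd ⬝ᵥ M.mulVec dd) := by
      linear_combination (η*(1/2)) * F5
    have E6 : η*(1/2)*(vq ⬝ᵥ M.mulVec vq) = η*(1/2)*(vq ⬝ᵥ (A s).mulVec vq)
        + η*(1/2)*a^2 := by
      linear_combination (η*(1/2)) * F6
    have hSfs : Sf s = η*(1/2)*(vq ⬝ᵥ (A s).mulVec vq) := by
      rw [hSfdef]
    have hSfs1 : Sf (s+1) = η*(1/2)*(dd ⬝ᵥ M.mulVec dd) := by
      rw [hSfdef]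
    rw [hSfs, hSfs1]
    linarith [F1, F2, F3, F4', E5, E6, F7]
  -- summation
  have hsum1 : ∑ s ∈ Finset.range T, ((Sf s - Sf (s+1)) + (1/(2*η))*(Lf (s+1) - Lf s))
      = (Sf 0 - Sf T) + (1/(2*η))*(Lf T - Lf 0) := by
    rw [Finset.sum_add_distrib, Finset.sum_range_sub' Sf T, ← Finset.mul_sum,
      Finset.sum_range_sub Lf T]
  have hsum2 : ∑ s ∈ Finset.range T, (lam * r (w (s+1)) - lam * r (w (s+1+1)))
      = lam * r (w 1) - lam * r (w (T+1)) :=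
    Finset.sum_range_sub' (fun s => lam * r (w (s+1))) T
  have hIcc : ∑ t ∈ Finset.Icc 1 T, (f t (w t) + lam * r (w t) - f t wstar - lam * r wstar)
      = ∑ s ∈ Finset.range T,
        (f (s+1) (w (s+1)) + lam * r (w (s+1)) - f (s+1) wstar - lam * r wstar) := by
    rw [← Finset.Ico_add_one_right_eq_Icc, Finset.sum_Ico_eq_sum_range]
    have hT1 : T + 1 - 1 = T := by omega
    rw [hT1]
    exact Finset.sum_congr rfl fun i _ => by rw [add_comm 1 i]
  have hsplit : ∀ s : ℕ,
      f (s+1) (w (s+1)) + lam * r (w (s+1)) - f (s+1) wstar - lam * r wstar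
        = (f (s+1) (w (s+1)) + lam * r (w (s+1+1)) - f (s+1) wstar - lam * r wstar)
          + (lam * r (w (s+1)) - lam * r (w (s+1+1))) := by
    intro s; ring
  have hsumle : ∑ t ∈ Finset.Icc 1 T, (f t (w t) + lam * r (w t) - f t wstar - lam * r wstar)
      ≤ (Sf 0 - Sf T) + (1/(2*η))*(Lf T - Lf 0) + (lam * r (w 1) - lam * r (w (T+1))) := by
    rw [hIcc]
    calc ∑ s ∈ Finset.range T,
        (f (s+1) (w (s+1)) + lam * r (w (s+1)) - f (s+1) wstar - lam * r wstar)
        = ∑ s ∈ Finset.range T,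
          ((f (s+1) (w (s+1)) + lam * r (w (s+1+1)) - f (s+1) wstar - lam * r wstar)
            + (lam * r (w (s+1)) - lam * r (w (s+1+1)))) :=
          Finset.sum_congr rfl fun s _ => hsplit s
      _ = ∑ s ∈ Finset.range T,
            (f (s+1) (w (s+1)) + lam * r (w (s+1+1)) - f (s+1) wstar - lam * r wstar)
          + ∑ s ∈ Finset.range T, (lam * r (w (s+1)) - lam * r (w (s+1+1))) :=
          Finset.sum_add_distrib
      _ ≤ ∑ s ∈ Finset.range T, ((Sf s - Sf (s+1)) + (1/(2*η))*(Lf (s+1) - Lf s))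
          + (lam * r (w 1) - lam * r (w (T+1))) := by
          rw [hsum2]
          exact add_le_add_left (Finset.sum_le_sum fun s _ => perstep s) _
      _ = (Sf 0 - Sf T) + (1/(2*η))*(Lf T - Lf 0) + (lam * r (w 1) - lam * r (w (T+1))) := by
          rw [hsum1]
  -- numeric bounds
  have hrT : 0 ≤ lam * r (w (T+1)) := mul_nonneg hlam (hr0 _ (hw _))
  have hSfT : 0 ≤ Sf T := by
    rw [hSfdef]
    exact mul_nonneg (by positivity) (hpsd T _)
  have hSf0 : Sf 0 ≤ η*(1/2)*ε*D^2 := by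
    rw [hSfdef]
    simp only
    rw [hQform 0]
    simp only [show Finset.Icc 1 0 = (∅ : Finset ℕ) from rfl, Finset.sum_empty, add_zero]
    have h1 : (wstar - w 1) ⬝ᵥ (wstar - w 1) ≤ D^2 := hdot_le wstar hws (w 1) (hw 1)
    have h2 : (0:ℝ) ≤ η*(1/2)*ε := by positivity
    calc η*(1/2)*(ε*((wstar - w 1) ⬝ᵥ (wstar - w 1)))
        = (η*(1/2)*ε)*((wstar - w 1) ⬝ᵥ (wstar - w 1)) := by ring
      _ ≤ (η*(1/2)*ε)*D^2 := mul_le_mul_of_nonneg_left h1 h2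
      _ = η*(1/2)*ε*D^2 := by ring
  have hLf0 : Lf 0 = (n:ℝ)*Real.log ε := by
    rw [hLfdef]
    simp only
    rw [hA0, Matrix.det_smul, Matrix.det_one, mul_one]
    rw [show (Fintype.card (Fin n)) = n from Fintype.card_fin n]
    rw [Real.log_pow]
  have hTpos : (0:ℝ) < (T:ℝ) := by exact_mod_cast Nat.pos_of_ne_zero (by omega)
  have hnG : (0:ℝ) < (n:ℝ)*ε + G^2 := by positivity
  have hLfT : Lf T ≤ (n:ℝ)*Real.log ((n:ℝ)*ε+G^2) + (n:ℝ)*Real.log T := by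
    have htr : (A T).trace ≤ ((n:ℝ)*ε + G^2)*T := by
      rw [htrace T]
      have h1 : ∑ s ∈ Finset.Icc 1 T, (g s ⬝ᵥ g s) ≤ ∑ s ∈ Finset.Icc 1 T, G^2 :=
        Finset.sum_le_sum fun s _ => hgg_le s
      have h2 : ∑ s ∈ Finset.Icc 1 T, (G:ℝ)^2 = T*G^2 := by
        rw [Finset.sum_const, Nat.card_Icc]
        simp [nsmul_eq_mul]
      have h3 : (1:ℝ) ≤ (T:ℝ) := by exact_mod_cast hT
      nlinarith [mul_nonneg (Nat.cast_nonneg n : (0:ℝ) ≤ n) hεp.le]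
    have hdet_le : (A T).det ≤ (((n:ℝ)*ε + G^2)*T)^n := by
      calc (A T).det ≤ (A T).trace ^ n := my_det_le_trace_pow (A T) (hpd T).posSemidef
        _ ≤ (((n:ℝ)*ε + G^2)*T)^n := by
            apply pow_le_pow_left₀ _ htr
            rw [htrace T]
            have : 0 ≤ ∑ s ∈ Finset.Icc 1 T, (g s ⬝ᵥ g s) :=
              Finset.sum_nonneg fun s _ => my_dot_self_nonneg (g s)
            positivity
    rw [hLfdef]
    simp only
    calc Real.log (A T).det ≤ Real.log ((((n:ℝ)*ε + G^2)*T)^n) :=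
          Real.log_le_log (hdetpos T) hdet_le
      _ = (n:ℝ)*Real.log (((n:ℝ)*ε + G^2)*T) := by rw [Real.log_pow]
      _ = (n:ℝ)*Real.log ((n:ℝ)*ε+G^2) + (n:ℝ)*Real.log T := by
          rw [Real.log_mul hnG.ne' hTpos.ne']; ring
  have hscaled : (1/(2*η))*(Lf T - Lf 0)
      ≤ (1/(2*η))*((n:ℝ)*Real.log ((n:ℝ)*ε+G^2) + (n:ℝ)*Real.log T - (n:ℝ)*Real.log ε) := by
    apply mul_le_mul_of_nonneg_left _ (by positivity : (0:ℝ) ≤ 1/(2*η))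
    rw [hLf0]
    linarith [hLfT]
  have hfinal : (n:ℝ)/(2*η)*Real.log T
      + (η*(1/2)*ε*D^2 + (1/(2*η))*((n:ℝ)*Real.log ((n:ℝ)*ε+G^2) - (n:ℝ)*Real.log ε))
      = η*(1/2)*ε*D^2
        + (1/(2*η))*((n:ℝ)*Real.log ((n:ℝ)*ε+G^2) + (n:ℝ)*Real.log T - (n:ℝ)*Real.log ε) := by
    field_simp
    ring
  rw [hr1, mul_zero] at hsumle
  calc ∑ t ∈ Finset.Icc 1 T, (f t (w t) + lam * r (w t) - f t wstar - lam * r wstar)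
      ≤ (Sf 0 - Sf T) + (1/(2*η))*(Lf T - Lf 0) + (0 - lam * r (w (T+1))) := hsumle
    _ ≤ η*(1/2)*ε*D^2
        + (1/(2*η))*((n:ℝ)*Real.log ((n:ℝ)*ε+G^2) + (n:ℝ)*Real.log T - (n:ℝ)*Real.log ε) := by
        linarith [hSf0, hSfT, hscaled, hrT]
    _ = (n:ℝ)/(2*η)*Real.log T
        + (η*(1/2)*ε*D^2 + (1/(2*η))*((n:ℝ)*Real.log ((n:ℝ)*ε+G^2) - (n:ℝ)*Real.log ε)) := by
        rw [hfinal]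
end
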